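/- arXiv:1206.6704 — 3 statements merged into one kernel-verified Lean document; each statement's English description precedes it below -/
import Mathlib

section
/- If α is an alternating p-form on V and r = n − p (so that e^I ∧ α has top degree n for each I ∈ Inc(r,n)), then Σ_{I ∈ Inc(r,n)} i_I (e^I ∧ α) = α. -/
/- Setting: `V` is an `n`-dimensional real vector space with basis `X_1, …, X_n`
(`b : Basis (Fin n) ℝ V`) and dual basis `e^1, …, e^n` (`b.coord`).  `Λ^p V*` is
modelled by `AlternatingMap ℝ V ℝ (Fin p)`, with the wedge product in the
shuffle (determinant) convention and interior contraction
`(i_v α)(v₁,…,v_{p-1}) = α (v, v₁, …, v_{p-1})`. -/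

open scoped TensorProduct

noncomputable section

namespace SEM

variable {V : Type*} [AddCommGroup V] [Module ℝ V]

/-- Alternating `p`-forms on `V`. -/
abbrev Form (V : Type*) [AddCommGroup V] [Module ℝ V] (p : ℕ) := V [⋀^Fin p]→ₗ[ℝ] ℝ

/-- The wedge product of alternating forms (shuffle/determinant convention). -/
noncomputable def wedge {p q : ℕ} (α : Form V p) (β : Form V q) : Form V (p + q) :=
  AlternatingMap.domDomCongr finSumFinEquiv
    ((TensorProduct.lid ℝ ℝ).toLinearMap.compAlternatingMap (α.domCoprod β))

/-- Re-indexing an alternating form along an equality of degrees. -/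
def castF {m k : ℕ} (h : m = k) (α : Form V m) : Form V k :=
  AlternatingMap.domDomCongr (finCongr h) α

/-- A linear functional regarded as an alternating 1-form. -/
def oneForm (f : Module.Dual ℝ V) : Form V 1 :=
  AlternatingMap.ofSubsingleton ℝ V ℝ 0 f

/-- Interior contraction `i_v`: `(icontr v α) (v₁,…,v_p) = α (v, v₁, …, v_p)`. -/
def icontr {p : ℕ} (v : V) (α : Form V (p + 1)) : Form V p :=
  α.curryLeft v

/-- Iterated interior contraction `i_J = i_{J_r} ∘ ⋯ ∘ i_{J_1}` with the first entry of
the list `J` contracted first, so that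
`(icontrFam J α) (w₁,…) = α (J 1, J 2, …, J r, w₁, …)`. -/
def icontrFam {p : ℕ} : {r : ℕ} → (J : Fin r → V) → Form V (p + r) → Form V p
  | 0, _, α => α
  | _ + 1, J, α => icontrFam (fun i => J i.succ) (icontr (J 0) α)

/-- The composite operator `i_{v_1} ∘ i_{v_2} ∘ ⋯ ∘ i_{v_q}` (the last entry of `v`
is contracted first). -/
def icontrComp : {p q : ℕ} → (v : Fin q → V) → Form V (p + q) → Form V p
  | _, 0, _, α => α
  | p, q + 1, v, α =>
      icontr (v 0) (icontrComp (p := p + 1) (fun i => v i.succ) (castF (by omega) α))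

/-- The wedge `e^{I_1} ∧ ⋯ ∧ e^{I_r}` of a family of `1`-forms. -/
def eFam : {r : ℕ} → (Fin r → Module.Dual ℝ V) → Form V r
  | 0, _ => AlternatingMap.constOfIsEmpty ℝ V (Fin 0) 1
  | r + 1, f => castF (Nat.add_comm 1 r) (wedge (oneForm (f 0)) (eFam fun i => f i.succ))

/-- Strict monotonicity is decidable, so that the set `Inc(r,n)` of strictly increasing
lists `(I_1 < ⋯ < I_r)` with entries in `{1,…,n}`, modelled as
`{I : Fin r → Fin n // StrictMono I}`, is a finite type. -/
instance {r n : ℕ} : DecidablePred (StrictMono : (Fin r → Fin n) → Prop) := fun _ =>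
  decidable_of_iff (∀ a b, a < b → _ < _) Iff.rfl

/-- The sign `ε(Î)` of the permutation sorting the free list `Î` into increasing order,
equal to `0` when `Î` has a repeated entry. -/
def eps {m n : ℕ} (f : Fin m → Fin n) : ℤ :=
  if Function.Injective f then (Equiv.Perm.sign (Tuple.sort f) : ℤ) else 0

end SEM

section Aux

open TensorProduct Equiv

set_option maxHeartbeats 1000000
set_option synthInstance.maxHeartbeats 400000

variable {V : Type*} [AddCommGroup V] [Module ℝ V]

/-- Concatenation of two tuples, landing in `Fin (p + r)`. -/
def glue {α : Type*} {r p : ℕ} (J : Fin r → α) (w : Fin p → α) (i : Fin (p + r)) : α :=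
  if h : (i : ℕ) < r then J ⟨i, h⟩ else w ⟨(i : ℕ) - r, by have := i.isLt; omega⟩

theorem icontrFam_apply {p : ℕ} : ∀ {r : ℕ} (J : Fin r → V) (θ : SEM.Form V (p + r))
    (w : Fin p → V), SEM.icontrFam J θ w = θ (glue J w) := by
  intro r
  induction r with
  | zero =>
    intro J θ w
    show θ w = θ (glue J w)
    congr 1
  | succ r ih =>
    intro J θ w
    show SEM.icontrFam (fun i => J i.succ) (SEM.icontr (J 0) θ) w = θ (glue J w)
    rw [ih]
    show θ (Matrix.vecCons (J 0) (glue (fun i => J i.succ) w)) = θ (glue J w)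
    congr 1
    funext i
    refine Fin.cases ?_ ?_ i
    · rw [Matrix.cons_val_zero, glue, dif_pos (by simp only [Fin.val_zero]; omega)]
      congr 1
    · intro k
      rw [Matrix.cons_val_succ]
      by_cases h : (k : ℕ) < r
      · rw [glue, glue, dif_pos h, dif_pos (by simp only [Fin.val_succ]; omega)]
        show J (Fin.succ ⟨(k : ℕ), h⟩) = J _
        congr 1
      · rw [glue, glue, dif_neg h, dif_neg (by simp only [Fin.val_succ]; omega)]
        congr 1
        exact Fin.ext (by simp only [Fin.val_succ]; have := k.isLt; omega)

theorem castF_apply {m k : ℕ} (h : m = k) (θ : SEM.Form V m) (u : Fin k → V) :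
    SEM.castF h θ u = θ (fun i => u (finCongr h i)) := rfl

theorem wedge_apply {q1 q2 : ℕ} (β : SEM.Form V q1) (γ : SEM.Form V q2)
    (u : Fin (q1 + q2) → V) :
    SEM.wedge β γ u
      = TensorProduct.lid ℝ ℝ (β.domCoprod γ (fun s => u (finSumFinEquiv s))) := rfl

theorem oneForm_apply (f : Module.Dual ℝ V) (v : Fin 1 → V) :
    SEM.oneForm f v = f (v 0) := rfl

theorem summand_apply_eq_zero {ιa ιb : Type*} [Fintype ιa] [Fintype ιb]
    [DecidableEq ιa] [DecidableEq ιb]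
    (a : V [⋀^ιa]→ₗ[ℝ] ℝ) (c : V [⋀^ιb]→ₗ[ℝ] ℝ) (z : ιa ⊕ ιb → V)
    (σ : Perm (ιa ⊕ ιb))
    (h : a (fun i => z (σ (Sum.inl i))) = 0 ∨ c (fun i => z (σ (Sum.inr i))) = 0) :
    AlternatingMap.domCoprod.summand a c (Quotient.mk'' σ) z = 0 := by
  rw [AlternatingMap.domCoprod.summand_mk'', MultilinearMap.smul_apply,
    MultilinearMap.domDomCongr_apply, MultilinearMap.domCoprod_apply]
  rcases h with h | h
  · rw [show ((a : MultilinearMap ℝ (fun _ : ιa => V) ℝ) fun i => z (σ (Sum.inl i))) = 0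
      from h, TensorProduct.zero_tmul, smul_zero]
  · rw [show ((c : MultilinearMap ℝ (fun _ : ιb => V) ℝ) fun i => z (σ (Sum.inr i))) = 0
      from h, TensorProduct.tmul_zero, smul_zero]

theorem domCoprod_apply_eq_zero {ιa ιb : Type*} [Fintype ιa] [Fintype ιb]
    [DecidableEq ιa] [DecidableEq ιb]
    (a : V [⋀^ιa]→ₗ[ℝ] ℝ) (c : V [⋀^ιb]→ₗ[ℝ] ℝ) (z : ιa ⊕ ιb → V)
    (H : ∀ σ : Perm (ιa ⊕ ιb),
      a (fun i => z (σ (Sum.inl i))) = 0 ∨ c (fun i => z (σ (Sum.inr i))) = 0) :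
    a.domCoprod c z = 0 := by
  rw [AlternatingMap.domCoprod_apply, MultilinearMap.sum_apply]
  refine Finset.sum_eq_zero fun σ _ => ?_
  induction σ using Quotient.inductionOn' with
  | h σ => exact summand_apply_eq_zero a c z σ (H σ)

theorem domCoprod_apply_eq_single {ιa ιb : Type*} [Fintype ιa] [Fintype ιb]
    [DecidableEq ιa] [DecidableEq ιb]
    (a : V [⋀^ιa]→ₗ[ℝ] ℝ) (c : V [⋀^ιb]→ₗ[ℝ] ℝ) (z : ιa ⊕ ιb → V)
    (H : ∀ σ : Perm (ιa ⊕ ιb), σ ∉ (Perm.sumCongrHom ιa ιb).range →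
      a (fun i => z (σ (Sum.inl i))) = 0 ∨ c (fun i => z (σ (Sum.inr i))) = 0) :
    a.domCoprod c z
      = a (fun i => z (Sum.inl i)) ⊗ₜ[ℝ] c (fun i => z (Sum.inr i)) := by
  rw [AlternatingMap.domCoprod_apply, MultilinearMap.sum_apply]
  have h0 : ∀ σ ∈ (Finset.univ : Finset (Perm.ModSumCongr ιa ιb)),
      σ ≠ Quotient.mk'' 1 → AlternatingMap.domCoprod.summand a c σ z = 0 := by
    intro σ _ hne
    revert hne
    induction σ using Quotient.inductionOn' with
    | h σ =>
      intro hne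
      have hσ : σ ∉ (Perm.sumCongrHom ιa ιb).range := by
        intro hmem
        refine hne ?_
        rw [Quotient.eq'', QuotientGroup.leftRel_apply]
        simpa using inv_mem hmem
      exact summand_apply_eq_zero a c z σ (H σ hσ)
  have hs := Finset.sum_eq_single_of_mem (s := (Finset.univ : Finset (Perm.ModSumCongr ιa ιb)))
    (f := fun σ => AlternatingMap.domCoprod.summand a c σ z)
    (Quotient.mk'' (1 : Perm (ιa ⊕ ιb))) (Finset.mem_univ _) h0
  refine hs.trans ?_
  show AlternatingMap.domCoprod.summand a c (Quotient.mk'' (1 : Perm (ιa ⊕ ιb))) z = _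
  rw [AlternatingMap.domCoprod.summand_mk'', MultilinearMap.smul_apply,
    MultilinearMap.domDomCongr_apply, MultilinearMap.domCoprod_apply]
  simp

/-- The index equivalence used in `eFam_succ_apply`. -/
def eE (r : ℕ) : (Fin 1 ⊕ Fin r) ≃ Fin (r + 1) :=
  finSumFinEquiv.trans (finCongr (Nat.add_comm 1 r))

theorem eFam_succ_apply {r : ℕ} (g : Fin (r + 1) → Module.Dual ℝ V) (y : Fin (r + 1) → V) :
    SEM.eFam g y = TensorProduct.lid ℝ ℝ
      ((SEM.oneForm (g 0)).domCoprod (SEM.eFam fun i => g i.succ)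
        (fun s => y (eE r s))) := rfl

theorem eE_inl (r : ℕ) (i : Fin 1) : eE r (Sum.inl i) = 0 := by
  apply Fin.ext
  simp [eE, Fin.eq_zero i]

theorem eE_inr (r : ℕ) (j : Fin r) : eE r (Sum.inr j) = j.succ := by
  apply Fin.ext
  simp [eE, Fin.val_succ]

theorem eFam_eq_zero : ∀ {r : ℕ} (g : Fin r → Module.Dual ℝ V) (y : Fin r → V) (j₀ : Fin r),
    (∀ i, g i (y j₀) = 0) → SEM.eFam g y = 0 := by
  intro r
  induction r with
  | zero => exact fun g y j₀ _ => j₀.elim0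
  | succ r ih =>
    intro g y j₀ h
    have H : ∀ σ : Perm (Fin 1 ⊕ Fin r),
        SEM.oneForm (g 0) (fun i => (fun s => y (eE r s)) (σ (Sum.inl i))) = 0 ∨
        SEM.eFam (fun i => g i.succ) (fun i => (fun s => y (eE r s)) (σ (Sum.inr i))) = 0 := by
      intro σ
      by_cases hc : σ (Sum.inl 0) = (eE r).symm j₀
      · left
        rw [oneForm_apply]
        show g 0 (y (eE r (σ (Sum.inl 0)))) = 0
        rw [hc, Equiv.apply_symm_apply]
        exact h 0
      · right
        obtain ⟨s, hs⟩ := σ.surjective ((eE r).symm j₀)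
        rcases s with i | t
        · exact absurd (by rw [Fin.eq_zero i] at hs; exact hs) hc
        · refine ih _ _ t fun i => ?_
          show g i.succ (y (eE r (σ (Sum.inr t)))) = 0
          rw [hs, Equiv.apply_symm_apply]
          exact h i.succ
    rw [eFam_succ_apply, domCoprod_apply_eq_zero _ _ _ H, LinearEquiv.map_zero]

theorem eFam_delta : ∀ {r : ℕ} (g : Fin r → Module.Dual ℝ V) (x : Fin r → V),
    (∀ i j, g i (x j) = if i = j then 1 else 0) → SEM.eFam g x = 1 := by
  intro r
  induction r with
  | zero =>
    intro g x _
    rfl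
  | succ r ih =>
    intro g x hgx
    have H : ∀ σ : Perm (Fin 1 ⊕ Fin r), σ ∉ (Perm.sumCongrHom (Fin 1) (Fin r)).range →
        SEM.oneForm (g 0) (fun i => (fun s => x (eE r s)) (σ (Sum.inl i))) = 0 ∨
        SEM.eFam (fun i => g i.succ) (fun i => (fun s => x (eE r s)) (σ (Sum.inr i))) = 0 := by
      intro σ hσ
      left
      have hm : ¬ Set.MapsTo σ (Set.range Sum.inl) (Set.range Sum.inl) := fun hmt =>
        hσ (Perm.mem_sumCongrHom_range_of_perm_mapsTo_inl hmt)
      have hex : ∃ t : Fin r, σ (Sum.inl 0) = Sum.inr t := by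
        rcases hd : σ (Sum.inl 0) with i | t
        · exfalso
          apply hm
          rintro y ⟨i1, rfl⟩
          rw [Fin.eq_zero i1, hd]
          exact ⟨i, rfl⟩
        · exact ⟨t, rfl⟩
      obtain ⟨t, ht⟩ := hex
      rw [oneForm_apply]
      show g 0 (x (eE r (σ (Sum.inl 0)))) = 0
      rw [ht, eE_inr, hgx 0 t.succ, if_neg (by simp [Fin.ext_iff])]
    rw [eFam_succ_apply, domCoprod_apply_eq_single _ _ _ H]
    have h0 : SEM.oneForm (g 0) (fun i : Fin 1 => x (eE r (Sum.inl i))) = 1 := by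
      rw [oneForm_apply]
      show g 0 (x (eE r (Sum.inl 0))) = 1
      rw [eE_inl, hgx 0 0, if_pos rfl]
    have h1 : SEM.eFam (fun i => g i.succ) (fun j : Fin r => x (eE r (Sum.inr j))) = 1 := by
      refine ih _ _ fun i j => ?_
      show g i.succ (x (eE r (Sum.inr j))) = _
      rw [eE_inr, hgx i.succ j.succ]
      simp [Fin.succ_inj]
    show TensorProduct.lid ℝ ℝ
      (SEM.oneForm (g 0) (fun i : Fin 1 => x (eE r (Sum.inl i))) ⊗ₜ[ℝ]
        SEM.eFam (fun i => g i.succ) (fun j : Fin r => x (eE r (Sum.inr j)))) = 1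
    rw [h0, h1]
    simp

theorem key_domCoprod {r p : ℕ} (g : Fin r → Module.Dual ℝ V) (α : SEM.Form V p)
    (z : Fin r ⊕ Fin p → V)
    (h1 : ∀ i j, g i (z (Sum.inl j)) = if i = j then 1 else 0)
    (h2 : ∀ i t, g i (z (Sum.inr t)) = 0) :
    (SEM.eFam g).domCoprod α z = (1 : ℝ) ⊗ₜ[ℝ] α (fun t => z (Sum.inr t)) := by
  have H : ∀ σ : Perm (Fin r ⊕ Fin p), σ ∉ (Perm.sumCongrHom (Fin r) (Fin p)).range →
      SEM.eFam g (fun i => z (σ (Sum.inl i))) = 0 ∨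
      α (fun i => z (σ (Sum.inr i))) = 0 := by
    intro σ hσ
    left
    have hm : ¬ Set.MapsTo σ (Set.range Sum.inl) (Set.range Sum.inl) := fun hmt =>
      hσ (Perm.mem_sumCongrHom_range_of_perm_mapsTo_inl hmt)
    have hex : ∃ (s : Fin r) (t : Fin p), σ (Sum.inl s) = Sum.inr t := by
      by_contra hn
      push_neg at hn
      apply hm
      rintro y ⟨s, rfl⟩
      rcases hd : σ (Sum.inl s) with i | t
      · exact ⟨i, rfl⟩
      · exact absurd hd (hn s t)
    obtain ⟨s, t, hst⟩ := hex
    refine eFam_eq_zero g _ s fun i => ?_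
    show g i (z (σ (Sum.inl s))) = 0
    rw [hst]
    exact h2 i t
  rw [domCoprod_apply_eq_single _ _ _ H,
    show SEM.eFam g (fun i => z (Sum.inl i)) = 1 from eFam_delta _ _ h1]

theorem altSum_apply {κ : Type*} {q : ℕ} (s : Finset κ) (f : κ → SEM.Form V q)
    (v : Fin q → V) : (∑ i ∈ s, f i) v = ∑ i ∈ s, f i v := by
  induction s using Finset.cons_induction with
  | empty => simp
  | cons a s ha ih => simp [Finset.sum_cons, ih]

theorem full_term {r p : ℕ} (g : Fin r → Module.Dual ℝ V) (α : SEM.Form V p)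
    (J : Fin r → V) (w : Fin p → V)
    (h1 : ∀ i j, g i (J j) = if i = j then 1 else 0)
    (h2 : ∀ i t, g i (w t) = 0) :
    SEM.icontrFam J (SEM.castF (Nat.add_comm r p) (SEM.wedge (SEM.eFam g) α)) w = α w := by
  have hval : ∀ x : Fin (r + p), ((finCongr (Nat.add_comm r p) x) : ℕ) = (x : ℕ) :=
    fun x => rfl
  have hinl : ∀ j : Fin r, ((finSumFinEquiv (Sum.inl j) : Fin (r + p)) : ℕ) = (j : ℕ) := by
    intro j
    rw [finSumFinEquiv_apply_left]
    rfl
  have hinr : ∀ t : Fin p, ((finSumFinEquiv (Sum.inr t) : Fin (r + p)) : ℕ) = r + (t : ℕ) := by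
    intro t
    rw [finSumFinEquiv_apply_right]
    rfl
  have hz1 : ∀ j : Fin r,
      glue J w (finCongr (Nat.add_comm r p) (finSumFinEquiv (Sum.inl j))) = J j := by
    intro j
    rw [glue, dif_pos (by rw [hval, hinl]; exact j.isLt)]
    exact congrArg J (Fin.ext (by rw [hval, hinl]))
  have hz2 : ∀ t : Fin p,
      glue J w (finCongr (Nat.add_comm r p) (finSumFinEquiv (Sum.inr t))) = w t := by
    intro t
    rw [glue, dif_neg (by rw [hval, hinr]; omega)]
    refine congrArg w (Fin.ext ?_)
    show (↑(finCongr (Nat.add_comm r p) (finSumFinEquiv (Sum.inr t))) - r : ℕ) = (t : ℕ)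
    rw [hval, hinr]
    omega
  rw [icontrFam_apply, castF_apply, wedge_apply]
  show (TensorProduct.lid ℝ ℝ) ((SEM.eFam g).domCoprod α
    (fun s => glue J w (finCongr (Nat.add_comm r p) (finSumFinEquiv s)))) = α w
  rw [key_domCoprod g α _ (fun i j => by rw [hz1]; exact h1 i j)
    (fun i t => by rw [hz2]; exact h2 i t)]
  rw [TensorProduct.lid_tmul, one_smul]
  exact congrArg α (funext fun t => hz2 t)

end Aux


/-- If `α` is an alternating `p`-form on the `n`-dimensional space `V`
and `r = n - p`, so that each `e^I ∧ α` is a top form, then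
`Σ_{I ∈ Inc(n-p,n)} i_I (e^I ∧ α) = α`. -/
theorem statement2 {V : Type*} [AddCommGroup V] [Module ℝ V] {n p : ℕ} (hp : p ≤ n)
    (b : Module.Basis (Fin n) ℝ V) (α : SEM.Form V p) :
    ∑ I : {I : Fin (n - p) → Fin n // StrictMono I},
        SEM.icontrFam (fun s => b (I.1 s))
          (SEM.castF (Nat.add_comm (n - p) p)
            (SEM.wedge (SEM.eFam fun s => b.coord (I.1 s)) α))
      = α := by
  classical
  refine Module.Basis.ext_alternating b fun v hv => ?_
  rw [altSum_apply]
  have hcard : ((Finset.image v Finset.univ)ᶜ : Finset (Fin n)).card = n - p := by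
    rw [Finset.card_compl, Finset.card_image_of_injective _ hv]
    simp
  set s : Finset (Fin n) := (Finset.image v Finset.univ)ᶜ with hsdef
  set I₀ : {I : Fin (n - p) → Fin n // StrictMono I} :=
    ⟨fun i => s.orderEmbOfFin hcard i, (s.orderEmbOfFin hcard).strictMono⟩ with hI₀def
  have hI₀mem : ∀ i, I₀.1 i ∈ s := fun i => Finset.orderEmbOfFin_mem s hcard i
  have hmain : ∀ (I : {I : Fin (n - p) → Fin n // StrictMono I}),
      I ∈ (Finset.univ : Finset {I : Fin (n - p) → Fin n // StrictMono I}) → I ≠ I₀ →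
      (SEM.icontrFam (fun s2 => b (I.1 s2))
        (SEM.castF (Nat.add_comm (n - p) p)
          (SEM.wedge (SEM.eFam fun s2 => b.coord (I.1 s2)) α))) (fun i => b (v i)) = 0 := by
    intro I _ hne
    rw [icontrFam_apply]
    have hover : ∃ (s0 : Fin (n - p)) (t : Fin p), I.1 s0 = v t := by
      by_contra hn
      push_neg at hn
      apply hne
      have hmem : ∀ x, I.1 x ∈ s := by
        intro x
        rw [hsdef, Finset.mem_compl]
        intro hxmem
        obtain ⟨t, _, ht⟩ := Finset.mem_image.mp hxmem
        exact hn x t ht.symm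
      have heq := Finset.orderEmbOfFin_unique hcard hmem I.2
      exact Subtype.ext heq
    obtain ⟨s0, t0, hst⟩ := hover
    refine AlternatingMap.map_eq_zero_of_eq _ _
      (i := ⟨(s0 : ℕ), by have := s0.isLt; omega⟩)
      (j := ⟨n - p + (t0 : ℕ), by have := t0.isLt; omega⟩) ?_
      (by simp only [ne_eq, Fin.mk.injEq]; have := s0.isLt; omega)
    rw [glue, glue, dif_pos (show ((s0 : ℕ) < n - p) from s0.isLt),
      dif_neg (show ¬ (n - p + (t0 : ℕ) < n - p) by omega)]
    show b (I.1 ⟨(s0 : ℕ), s0.isLt⟩) = b (v _)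
    have : (⟨(s0 : ℕ), s0.isLt⟩ : Fin (n - p)) = s0 := rfl
    rw [this, hst]
    refine congrArg b (congrArg v (Fin.ext ?_))
    show (t0 : ℕ) = n - p + (t0 : ℕ) - (n - p)
    omega
  refine (Finset.sum_eq_single_of_mem I₀ (Finset.mem_univ _) hmain).trans ?_
  refine full_term _ α _ _ ?_ ?_
  · intro i j
    rw [Module.Basis.coord_apply, Module.Basis.repr_self, Finsupp.single_apply]
    by_cases hij : i = j
    · subst hij
      simp
    · rw [if_neg hij, if_neg]
      intro hc
      exact hij ((s.orderEmbOfFin hcard).strictMono.injective hc).symm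
  · intro i t
    rw [Module.Basis.coord_apply, Module.Basis.repr_self, Finsupp.single_apply, if_neg]
    intro hc
    have hvt : v t ∈ Finset.image v Finset.univ := Finset.mem_image_of_mem v (Finset.mem_univ t)
    rw [hc] at hvt
    exact (Finset.mem_compl.mp (hI₀mem i)) hvt
end
end

section
/- Let α be an alternating p-form on V, let Ω be an alternating n-form on V, let W^I be real numbers for I ∈ Inc(p,n), and define the operator i_W = (1/p!) Σ_{I ∈ Inc(p,n)} W^I · i_{X_{I_p}} ∘ ⋯ ∘ i_{X_{I_1}}. Then (i_W α) · Ω = α ∧ (i_W Ω), i.e. the scalar i_W α times the n-form Ω equals the wedge product of α with the (n−p)-form i_W Ω. -/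
/- Setting: `V` is an `n`-dimensional real vector space with basis `X_1, …, X_n`
(`b : Basis (Fin n) ℝ V`) and dual basis `e^1, …, e^n` (`b.coord`).  `Λ^p V*` is
modelled by `AlternatingMap ℝ V ℝ (Fin p)`, with the wedge product in the
shuffle (determinant) convention and interior contraction
`(i_v α)(v₁,…,v_{p-1}) = α (v, v₁, …, v_{p-1})`. -/

open scoped TensorProduct

noncomputable section

namespace SEM

variable {V : Type*} [AddCommGroup V] [Module ℝ V]

/-- piecewise tuple: first `r` entries from `J`, rest from `u`. -/
def tup {X : Type*} {r m : ℕ} (J : Fin r → X) (u : Fin m → X) : Fin (m + r) → X :=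
  fun i => if h : (i : ℕ) < r then J ⟨i, h⟩ else u ⟨(i : ℕ) - r, by omega⟩

theorem tup_lt {X : Type*} {r m : ℕ} (J : Fin r → X) (u : Fin m → X) (i : Fin (m + r))
    (h : (i : ℕ) < r) : tup J u i = J ⟨i, h⟩ := dif_pos h

theorem tup_ge {X : Type*} {r m : ℕ} (J : Fin r → X) (u : Fin m → X) (i : Fin (m + r))
    (h : ¬ (i : ℕ) < r) : tup J u i = u ⟨(i : ℕ) - r, by omega⟩ := dif_neg h

theorem icontrFam_apply {m : ℕ} : ∀ {r : ℕ} (J : Fin r → V) (γ : Form V (m + r))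
    (u : Fin m → V), icontrFam J γ u = γ (tup J u)
  | 0, J, γ, u => by
      show γ u = _
      congr 1
  | r + 1, J, γ, u => by
      show icontrFam (fun i => J i.succ) (icontr (J 0) γ) u = _
      rw [icontrFam_apply (fun i => J i.succ) (icontr (J 0) γ) u]
      show γ (Matrix.vecCons (J 0) (tup (fun i => J i.succ) u)) = _
      congr 1
      funext i
      refine Fin.cases ?_ (fun j => ?_) i
      · simp [tup]
      · simp only [Matrix.cons_val_succ, tup, Fin.val_succ]
        by_cases h : (j : ℕ) < r
        · rw [dif_pos h, dif_pos (by omega)]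
          congr 1
        · rw [dif_neg h, dif_neg (by omega)]
          congr 1
          apply Fin.ext
          show (j:ℕ) - r = (j:ℕ) + 1 - (r+1)
          omega

theorem castF_apply {m k : ℕ} (h : m = k) (α : Form V m) (v : Fin k → V) :
    castF h α v = α (fun i => v (Fin.cast h i)) := rfl

theorem wedge_apply {p q : ℕ} (α : Form V p) (β : Form V q) (v : Fin (p + q) → V) :
    wedge α β v
      = TensorProduct.lid ℝ ℝ ((α.domCoprod β) (fun x => v (finSumFinEquiv x))) := rfl

theorem domCoprod_smul_right {p q : ℕ} (α : Form V p) (c : ℝ) (β : Form V q) :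
    α.domCoprod (c • β) = c • α.domCoprod β := by
  rw [← AlternatingMap.domCoprod'_apply, ← AlternatingMap.domCoprod'_apply,
    TensorProduct.tmul_smul, LinearMap.map_smul]

theorem domCoprod_sum_right {p q : ℕ} {ι : Type*} (t : Finset ι) (α : Form V p)
    (β : ι → Form V q) :
    α.domCoprod (∑ i ∈ t, β i) = ∑ i ∈ t, α.domCoprod (β i) := by
  rw [← AlternatingMap.domCoprod'_apply, TensorProduct.tmul_sum, map_sum]
  simp only [AlternatingMap.domCoprod'_apply]

theorem icontrFam_smul {m r : ℕ} (J : Fin r → V) (c : ℝ) (γ : Form V (m + r)) :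
    icontrFam J (c • γ) = c • icontrFam J γ := by
  ext u
  rw [AlternatingMap.smul_apply, icontrFam_apply, icontrFam_apply, AlternatingMap.smul_apply]

theorem castF_smul {m k : ℕ} (h : m = k) (c : ℝ) (γ : Form V m) :
    castF h (c • γ) = c • castF h γ := by
  ext v; rw [castF_apply, AlternatingMap.smul_apply, AlternatingMap.smul_apply, castF_apply]


theorem sign_smul_one (s : ℤˣ) : s • (1 : ℝ) = ((s : ℤ) : ℝ) := by
  rcases Int.units_eq_one_or s with h | h <;> subst h <;> simp [Units.smul_def]

theorem lid_sign_tmul (s : ℤˣ) (x : ℝ) :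
    (TensorProduct.lid ℝ ℝ) (s • (x ⊗ₜ[ℝ] ((s : ℤ) : ℝ))) = x := by
  rcases Int.units_eq_one_or s with h | h <;> subst h
  · simp [Units.smul_def, TensorProduct.lid_tmul]
  · rw [show (((-1 : ℤˣ) : ℤ) : ℝ) = -1 by norm_num,
      show (-1 : ℤˣ) • (x ⊗ₜ[ℝ] (-1 : ℝ)) = -(x ⊗ₜ[ℝ] (-1 : ℝ)) by
        rw [show (-1 : ℤˣ) = -(1 : ℤˣ) from rfl, Units.neg_smul, one_smul]]
    show (-x) • (-1 : ℝ) = x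
    simp

theorem core_det {n p q : ℕ} (h2 : n = q + p) (h3 : p + q = n)
    (b : Module.Basis (Fin n) ℝ V) (α : Form V p) (I : Fin p → Fin n)
    (hI : Function.Injective I) :
    wedge α (icontrFam (fun s => b (I s)) (castF h2 b.det)) (fun i => b (Fin.cast h3 i))
      = α (fun s => b (I s)) := by
  classical
  set β : Form V q := icontrFam (fun s => b (I s)) (castF h2 b.det) with hβ
  set g : Fin p ⊕ Fin q ≃ Fin n := finSumFinEquiv.trans (finCongr h3) with hg
  set C : Finset (Fin n) := (Finset.image I Finset.univ)ᶜ with hCdef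
  have hC : C.card = q := by
    rw [hCdef, Finset.card_compl, Finset.card_image_of_injective _ hI]
    simp; omega
  set T₀ : Fin q → Fin n := fun j => C.orderIsoOfFin hC j with hT₀
  have hT₀mem : ∀ j, T₀ j ∈ C := fun j => (C.orderIsoOfFin hC j).2
  have hT₀surj : ∀ x ∈ C, ∃ j, T₀ j = x := fun x hx =>
    ⟨(C.orderIsoOfFin hC).symm ⟨x, hx⟩, by
      simp only [hT₀]
      exact congrArg Subtype.val ((C.orderIsoOfFin hC).apply_symm_apply ⟨x, hx⟩)⟩
  set φf : Fin p ⊕ Fin q → Fin n := Sum.elim I T₀ with hφf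
  have hφinj : Function.Injective φf := by
    rintro (i | i) (j | j) hij
    · exact congrArg Sum.inl (hI hij)
    · exfalso
      have h1 : I i = T₀ j := hij
      have := hT₀mem j
      rw [← h1] at this
      simp [hCdef] at this
    · exfalso
      have h1 : T₀ i = I j := hij
      have := hT₀mem i
      rw [h1] at this
      simp [hCdef] at this
    · exact congrArg Sum.inr ((C.orderIsoOfFin hC).injective (Subtype.ext hij))
  set φ : (Fin p ⊕ Fin q) ≃ Fin n :=
    Equiv.ofBijective φf ((Fintype.bijective_iff_injective_and_card φf).2
      ⟨hφinj, by simp [h3]⟩) with hφ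
  set τ₀ : Equiv.Perm (Fin p ⊕ Fin q) := φ.trans g.symm with hτ₀
  have hβeval : ∀ u : Fin q → V,
      β u = b.det (fun i => tup (fun s => b (I s)) u (Fin.cast h2 i)) := by
    intro u
    rw [hβ, icontrFam_apply, castF_apply]
  have hzero : ∀ σ : Equiv.Perm.ModSumCongr (Fin p) (Fin q), σ ≠ Quotient.mk'' τ₀ →
      AlternatingMap.domCoprod.summand α β σ (fun x => b (g x)) = 0 := by
    intro σ
    induction σ using Quotient.inductionOn' with
    | h τ =>
    intro hσ
    rw [AlternatingMap.domCoprod.summand_mk'']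
    simp only [MultilinearMap.smul_apply, MultilinearMap.domDomCongr_apply,
      MultilinearMap.domCoprod_apply, AlternatingMap.coe_multilinearMap]
    suffices hb0 : β (fun i => b (g (τ (Sum.inr i)))) = 0 by
      rw [hb0, TensorProduct.tmul_zero, smul_zero]
    by_cases hcase : ∃ k s, g (τ (Sum.inr k)) = I s
    · obtain ⟨k, s, hks⟩ := hcase
      rw [hβeval]
      refine AlternatingMap.map_eq_zero_of_eq _ _
        (i := Fin.cast h2.symm ⟨(s : ℕ), by omega⟩)
        (j := Fin.cast h2.symm ⟨p + (k : ℕ), by have := k.isLt; omega⟩) ?_ ?_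
      · rw [show Fin.cast h2 (Fin.cast h2.symm ⟨(s : ℕ), by omega⟩)
              = (⟨(s : ℕ), by omega⟩ : Fin (q + p)) from rfl,
          show Fin.cast h2 (Fin.cast h2.symm ⟨p + (k : ℕ), by have := k.isLt; omega⟩)
              = (⟨p + (k : ℕ), by have := k.isLt; omega⟩ : Fin (q + p)) from rfl,
          tup_lt _ _ _ (by simpa using s.isLt), tup_ge _ _ _ (by simp)]
        have e1 : (⟨((⟨(s : ℕ), by omega⟩ : Fin (q + p)) : ℕ), by simpa using s.isLt⟩ : Fin p)
            = s := by apply Fin.ext; rfl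
        have e2 : (⟨((⟨p + (k : ℕ), by have := k.isLt; omega⟩ : Fin (q + p)) : ℕ) - p,
              by have := k.isLt; omega⟩ : Fin q)
            = k := by apply Fin.ext; show p + (k : ℕ) - p = k; omega
        rw [e1, e2, hks]
      · intro hcast
        have : (s : ℕ) = p + (k : ℕ) := by
          simpa [Fin.ext_iff] using hcast
        omega
    · push_neg at hcase
      exfalso
      apply hσ
      have hδr : ∀ k, ∃ j, (τ₀⁻¹ * τ) (Sum.inr k) = Sum.inr j := by
        intro k
        have hmem : g (τ (Sum.inr k)) ∈ C := by
          rw [hCdef, Finset.mem_compl]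
          simp only [Finset.mem_image, Finset.mem_univ, true_and, not_exists]
          intro s hs
          exact hcase k s hs.symm
        obtain ⟨j, hj⟩ := hT₀surj _ hmem
        refine ⟨j, ?_⟩
        have hτj : τ₀ (Sum.inr j) = τ (Sum.inr k) := by
          rw [hτ₀]
          show g.symm (φ (Sum.inr j)) = τ (Sum.inr k)
          rw [show φ (Sum.inr j) = T₀ j from rfl, hj]
          exact g.symm_apply_apply _
        rw [Equiv.Perm.mul_apply, ← hτj, Equiv.Perm.inv_def, Equiv.symm_apply_apply]
      have hmapsto : Set.MapsTo (⇑(τ₀⁻¹ * τ)) (Set.range Sum.inr) (Set.range Sum.inr) := by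
        rintro _ ⟨k, rfl⟩
        obtain ⟨j, hj⟩ := hδr k
        exact ⟨j, hj.symm⟩
      have hmem : (τ₀⁻¹ * τ) ∈ (Equiv.Perm.sumCongrHom (Fin p) (Fin q)).range :=
        Equiv.Perm.mem_sumCongrHom_range_of_perm_mapsTo_inl
          ((Equiv.Perm.perm_mapsTo_inl_iff_mapsTo_inr _).mpr hmapsto)
      refine Quotient.sound' (QuotientGroup.leftRel_apply.mpr ?_)
      have : (τ₀⁻¹ * τ)⁻¹ ∈ (Equiv.Perm.sumCongrHom (Fin p) (Fin q)).range :=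
        inv_mem hmem
      simpa [mul_inv_rev] using this
  have hu : ∀ x : Fin p ⊕ Fin q, g (τ₀ x) = φf x := by
    intro x
    rw [hτ₀]
    show g (g.symm (φ x)) = φf x
    rw [Equiv.apply_symm_apply]
    rfl
  have hψ : ∀ x : Fin p ⊕ Fin q, tup I T₀ (Fin.cast h2 (g x)) = φf x := by
    rintro (i | k)
    · have hv : ((Fin.cast h2 (g (Sum.inl i))) : ℕ) = (i : ℕ) := by
        simp [hg]
      rw [tup_lt _ _ _ (by rw [hv]; exact i.isLt)]
      show I _ = I i
      exact congrArg I (Fin.ext hv)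
    · have hv : ((Fin.cast h2 (g (Sum.inr k))) : ℕ) = p + (k : ℕ) := by
        simp [hg]
        omega
      rw [tup_ge _ _ _ (by rw [hv]; omega)]
      show T₀ _ = T₀ k
      refine congrArg T₀ (Fin.ext ?_)
      show ((Fin.cast h2 (g (Sum.inr k))) : ℕ) - p = (k : ℕ)
      rw [hv]; omega
  have hψ2 : ∀ y : Fin n, tup I T₀ (Fin.cast h2 y) = (g.permCongr τ₀) y := by
    intro y
    have h1 := hψ (g.symm y)
    rw [Equiv.apply_symm_apply] at h1
    rw [h1, Equiv.permCongr_apply, hu]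
  have hmain : (TensorProduct.lid ℝ ℝ)
      (AlternatingMap.domCoprod.summand α β (Quotient.mk'' τ₀) (fun x => b (g x)))
      = α (fun s => b (I s)) := by
    rw [AlternatingMap.domCoprod.summand_mk'']
    simp only [MultilinearMap.smul_apply, MultilinearMap.domDomCongr_apply,
      MultilinearMap.domCoprod_apply, AlternatingMap.coe_multilinearMap]
    have hαf : (fun i => b (g (τ₀ (Sum.inl i)))) = fun s => b (I s) := by
      funext i
      rw [hu]
      rfl
    have hβf : β (fun k => b (g (τ₀ (Sum.inr k))))
        = ((Equiv.Perm.sign τ₀ : ℤ) : ℝ) := by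
      rw [hβeval]
      have htuple : (fun i => tup (fun s => b (I s)) (fun k => b (g (τ₀ (Sum.inr k))))
            (Fin.cast h2 i)) = (⇑b ∘ ⇑(g.permCongr τ₀)) := by
        funext i
        have hub : (fun k => b (g (τ₀ (Sum.inr k)))) = fun k => b (T₀ k) := by
          funext k; rw [hu]; rfl
        rw [hub]
        show _ = b ((g.permCongr τ₀) i)
        rw [← hψ2 i]
        by_cases hcond : ((Fin.cast h2 i : Fin (q + p)) : ℕ) < p
        · rw [tup_lt _ _ _ hcond, tup_lt _ _ _ hcond]
        · rw [tup_ge _ _ _ hcond, tup_ge _ _ _ hcond]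
      rw [htuple, AlternatingMap.map_perm, Module.Basis.det_self, Equiv.Perm.sign_permCongr]
      exact sign_smul_one _
    rw [hαf, hβf]
    exact lid_sign_tmul _ _
  rw [wedge_apply]
  rw [show (fun x => (fun i => b (Fin.cast h3 i)) (finSumFinEquiv x))
        = fun x => b (g x) from rfl]
  rw [AlternatingMap.domCoprod_apply, MultilinearMap.sum_apply]
  have hsum : (∑ σ : Equiv.Perm.ModSumCongr (Fin p) (Fin q),
        AlternatingMap.domCoprod.summand α β σ (fun x => b (g x)))
      = AlternatingMap.domCoprod.summand α β (Quotient.mk'' τ₀) (fun x => b (g x)) :=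
    Finset.sum_eq_single_of_mem _ (Finset.mem_univ _) (fun σ _ hσ => hzero σ hσ)
  exact (congrArg (TensorProduct.lid ℝ ℝ) hsum).trans hmain

theorem sum_applyF {ι' : Type*} {N : Type*} [AddCommMonoid N] [Module ℝ N] {κ : Type*}
    (s : Finset ι') (f : ι' → AlternatingMap ℝ V N κ) (m : κ → V) :
    (∑ i ∈ s, f i) m = ∑ i ∈ s, f i m := by
  induction s using Finset.cons_induction with
  | empty => simp
  | cons a s ha ih => rw [Finset.sum_cons, Finset.sum_cons, AlternatingMap.add_apply, ih]

theorem wedge_smul_right_apply {p q : ℕ} (α : Form V p) (c : ℝ) (β : Form V q)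
    (v : Fin (p + q) → V) : wedge α (c • β) v = c * wedge α β v := by
  rw [wedge_apply, domCoprod_smul_right, AlternatingMap.smul_apply,
    (TensorProduct.lid ℝ ℝ).map_smul, smul_eq_mul]
  rfl

theorem wedge_sum_right_apply {p q : ℕ} {ι : Type*} (s : Finset ι) (α : Form V p)
    (β : ι → Form V q) (v : Fin (p + q) → V) :
    wedge α (∑ i ∈ s, β i) v = ∑ i ∈ s, wedge α (β i) v := by
  rw [wedge_apply, domCoprod_sum_right, sum_applyF,
    show (TensorProduct.lid ℝ ℝ)
        (∑ i ∈ s, (AlternatingMap.domCoprod α (β i)) fun x => v (finSumFinEquiv x))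
      = ∑ i ∈ s, (TensorProduct.lid ℝ ℝ)
          ((AlternatingMap.domCoprod α (β i)) fun x => v (finSumFinEquiv x)) from
      map_sum (TensorProduct.lid ℝ ℝ).toLinearMap
        (fun i => (α.domCoprod (β i)) fun x => v (finSumFinEquiv x)) s]
  rfl

theorem icontrFam_zero_apply {r : ℕ} (J : Fin r → V) (γ : Form V r) :
    icontrFam (p := 0) J (castF (Nat.zero_add r).symm γ) (fun i => i.elim0) = γ J := by
  rw [icontrFam_apply, castF_apply]
  congr 1
  funext i
  rw [tup_lt _ _ _ i.isLt]
  exact congrArg J (Fin.ext rfl)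

theorem coreOmega {n p q : ℕ} (h2 : n = q + p) (h3 : p + q = n)
    (b : Module.Basis (Fin n) ℝ V) (α : Form V p) (Ω : Form V n) (I : Fin p → Fin n)
    (hI : Function.Injective I) :
    wedge α (icontrFam (fun s => b (I s)) (castF h2 Ω)) (fun i => b (Fin.cast h3 i))
      = α (fun s => b (I s)) * Ω ⇑b := by
  conv_lhs => rw [AlternatingMap.eq_smul_basis_det (e := b) Ω]
  rw [castF_smul, icontrFam_smul, wedge_smul_right_apply, core_det h2 h3 b α I hI]
  ring

end SEM

/-- Let `α` be an alternating `p`-form and `Ω` an alternating `n`-form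
on the `n`-dimensional space `V`, let `W^I` be real numbers for `I ∈ Inc(p,n)` and let
`i_W = (1/p!) Σ_{I ∈ Inc(p,n)} W^I i_{X_{I_p}} ∘ ⋯ ∘ i_{X_{I_1}}`.  Then
`(i_W α) • Ω = α ∧ (i_W Ω)`: the scalar `i_W α` times `Ω` equals the wedge of `α` with
the `(n-p)`-form `i_W Ω`. -/
theorem statement10 {V : Type*} [AddCommGroup V] [Module ℝ V] {n p : ℕ} (hpn : p ≤ n)
    (b : Module.Basis (Fin n) ℝ V) (α : SEM.Form V p) (Ω : SEM.Form V n)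
    (W : {I : Fin p → Fin n // StrictMono I} → ℝ) :
    ((p.factorial : ℝ)⁻¹ *
        ∑ I : {I : Fin p → Fin n // StrictMono I},
          W I * SEM.icontrFam (p := 0) (fun s => b (I.1 s))
            (SEM.castF (Nat.zero_add p).symm α) (fun i => i.elim0)) • Ω
      = SEM.castF (by omega : p + (n - p) = n)
          (SEM.wedge α
            ((p.factorial : ℝ)⁻¹ •
              ∑ I : {I : Fin p → Fin n // StrictMono I},
                W I • SEM.icontrFam (fun s => b (I.1 s))
                  (SEM.castF (by omega : n = (n - p) + p) Ω))) := by
  classical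
  have hext : ∀ f g : SEM.Form V n, f ⇑b = g ⇑b → f = g := by
    intro f g h
    rw [AlternatingMap.eq_smul_basis_det (e := b) f,
      AlternatingMap.eq_smul_basis_det (e := b) g, h]
  apply hext
  trans ((p.factorial : ℝ)⁻¹ *
    ∑ I : {I : Fin p → Fin n // StrictMono I},
      W I * (α (fun s => b (I.1 s)) * Ω ⇑b))
  · rw [AlternatingMap.smul_apply, smul_eq_mul]
    simp only [SEM.icontrFam_zero_apply]
    rw [mul_assoc, Finset.sum_mul]
    congr 1
    exact Finset.sum_congr rfl fun I _ => by ring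
  · symm
    rw [SEM.castF_apply, SEM.wedge_smul_right_apply, SEM.wedge_sum_right_apply]
    congr 1
    refine Finset.sum_congr rfl fun I _ => ?_
    rw [SEM.wedge_smul_right_apply, SEM.coreOmega _ _ b α Ω _ I.2.injective]
end
end

section
/- Let V be an n-dimensional real vector space equipped with a nondegenerate symmetric bilinear form g, let T̂ : V → V be a linear map, and let Ω be a nonzero alternating n-form on V. Writing ũ = g(u,−) ∈ V* for u ∈ V, the following are equivalent: (i) g(T̂(u), v) = g(T̂(v), u) for all u, v ∈ V; (ii) ṽ ∧ i_{T̂(u)} Ω = ũ ∧ i_{T̂(v)} Ω for all u, v ∈ V. -/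
/- Setting: `V` is an `n`-dimensional real vector space with basis `X_1, …, X_n`
(`b : Basis (Fin n) ℝ V`) and dual basis `e^1, …, e^n` (`b.coord`).  `Λ^p V*` is
modelled by `AlternatingMap ℝ V ℝ (Fin p)`, with the wedge product in the
shuffle (determinant) convention and interior contraction
`(i_v α)(v₁,…,v_{p-1}) = α (v, v₁, …, v_{p-1})`. -/

open scoped TensorProduct

noncomputable section

section Aux
set_option synthInstance.maxHeartbeats 1000000
set_option maxHeartbeats 1000000

namespace SEM

open Equiv

variable {V : Type*} [AddCommGroup V] [Module ℝ V]

theorem mem_range_of_fix (m : ℕ) (π : Equiv.Perm (Fin 1 ⊕ Fin m)) (hπ : π (Sum.inl 0) = Sum.inl 0) :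
    π ∈ (Equiv.Perm.sumCongrHom (Fin 1) (Fin m)).range := by
  have key : ∀ j, ∃ k, π (Sum.inr j) = Sum.inr k := by
    intro j
    rcases h : π (Sum.inr j) with a | b
    · exfalso
      have ha : a = 0 := Subsingleton.elim _ _
      rw [ha] at h
      have := π.injective (h.trans hπ.symm)
      simp at this
    · exact ⟨b, rfl⟩
  choose F hF using key
  have hFinj : Function.Injective F := by
    intro a b hab
    have : π (Sum.inr a) = π (Sum.inr b) := by rw [hF a, hF b, hab]
    simpa using π.injective this
  refine ⟨(1, Equiv.ofBijective F (Finite.injective_iff_bijective.mp hFinj)), ?_⟩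
  ext x
  cases x with
  | inl a =>
    have ha : a = 0 := Subsingleton.elim _ _
    subst ha
    simp [Equiv.Perm.sumCongrHom, hπ]
  | inr j =>
    simp [Equiv.Perm.sumCongrHom, Equiv.ofBijective_apply, hF j]

theorem e_bij (m : ℕ) :
    Function.Bijective (fun t : Fin 1 ⊕ Fin m =>
      (Quotient.mk'' (Equiv.swap (Sum.inl 0) t) : Equiv.Perm.ModSumCongr (Fin 1) (Fin m))) := by
  constructor
  · intro t1 t2 h
    have h' := Quotient.exact' h
    rw [QuotientGroup.leftRel_apply] at h'
    obtain ⟨⟨sl, sr⟩, hs⟩ := h'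
    have := congrArg (fun σ : Equiv.Perm (Fin 1 ⊕ Fin m) => σ (Sum.inl 0)) hs
    simp only [Equiv.Perm.sumCongrHom_apply, Equiv.Perm.sumCongr_apply, Sum.map_inl,
      Equiv.Perm.coe_mul, Function.comp_apply, Equiv.Perm.inv_def] at this
    have hsl : sl 0 = 0 := Subsingleton.elim _ _
    rw [hsl] at this
    -- this : (swap (inl 0) t1).symm (swap (inl 0) t2 (inl 0)) = inl 0
    rw [Equiv.swap_apply_left] at this
    have := congrArg (Equiv.swap (Sum.inl 0) t1) this
    rw [Equiv.apply_symm_apply, Equiv.swap_apply_left] at this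
    exact this
  · intro c
    induction c using Quotient.inductionOn' with
    | h σ =>
      refine ⟨σ (Sum.inl 0), Quotient.sound' ?_⟩
      rw [QuotientGroup.leftRel_apply]
      apply mem_range_of_fix
      simp [Equiv.Perm.mul_apply, Equiv.Perm.inv_def, Equiv.swap_apply_right]

theorem lid_summand (f : Module.Dual ℝ V) {m : ℕ} (β : Form V m)
    (σ : Equiv.Perm (Fin 1 ⊕ Fin m)) (v : Fin 1 ⊕ Fin m → V) :
    TensorProduct.lid ℝ ℝ
        ((AlternatingMap.domCoprod.summand (oneForm f) β (Quotient.mk'' σ)) v) =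
      (Equiv.Perm.sign σ : ℤ) •
        (f (v (σ (Sum.inl 0))) * β (fun i => v (σ (Sum.inr i)))) := by
  rw [AlternatingMap.domCoprod.summand_mk'']
  rw [MultilinearMap.smul_apply, MultilinearMap.domDomCongr_apply, MultilinearMap.domCoprod_apply]
  rcases Int.units_eq_one_or (Equiv.Perm.sign σ) with h | h <;> rw [h] <;>
    simp [oneForm, AlternatingMap.ofSubsingleton, TensorProduct.lid_tmul, Function.comp,
      Units.smul_def, TensorProduct.neg_tmul]

theorem wedge_oneForm_apply (f : Module.Dual ℝ V) {m : ℕ} (β : Form V m) (x : Fin (1+m) → V) :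
    wedge (oneForm f) β x =
      f (x (finSumFinEquiv (Sum.inl 0))) * β (fun i => x (finSumFinEquiv (Sum.inr i)))
      - ∑ j : Fin m, f (x (finSumFinEquiv (Sum.inr j))) *
          β (fun i => if i = j then x (finSumFinEquiv (Sum.inl 0))
              else x (finSumFinEquiv (Sum.inr i))) := by
  have h1 : wedge (oneForm f) β x =
      (TensorProduct.lid ℝ ℝ) (((oneForm f).domCoprod β) (x ∘ finSumFinEquiv)) := rfl
  rw [h1, AlternatingMap.domCoprod_apply, MultilinearMap.sum_apply]
  letI : DecidableRel (QuotientGroup.leftRel (Equiv.Perm.sumCongrHom (Fin 1) (Fin m)).range).r :=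
    QuotientGroup.leftRelDecidable _
  refine Eq.trans (congrArg (TensorProduct.lid ℝ ℝ)
    (Fintype.sum_bijective _ (e_bij m) _ _ (fun t => rfl)).symm) ?_
  rw [Fintype.sum_sum_type]
  simp only [Finset.univ_unique, Finset.sum_singleton]
  rw [map_add, map_sum]
  simp only [lid_summand]
  have hd : (Sum.inl (default : Fin 1) : Fin 1 ⊕ Fin m) = Sum.inl 0 := rfl
  rw [hd, Equiv.swap_self]
  have hs : ∀ j : Fin m,
      Equiv.Perm.sign (Equiv.swap (Sum.inl 0 : Fin 1 ⊕ Fin m) (Sum.inr j)) = -1 := fun j =>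
    Equiv.Perm.sign_swap (by simp)
  simp only [hs]
  simp [Equiv.Perm.sign_refl, Units.val_neg, Units.val_one, neg_smul, sub_eq_add_neg,
    Finset.sum_neg_distrib, Equiv.swap_apply_left]
  refine Finset.sum_congr rfl fun j _ => ?_
  congr 1
  refine congrArg (fun t => β t) (funext fun i => ?_)
  by_cases hij : i = j
  · subst hij
    simp [Equiv.swap_apply_right, finSumFinEquiv]
  · rw [Equiv.swap_apply_of_ne_of_ne (by simp) (by simpa using hij)]
    simp [hij, finSumFinEquiv]

theorem key {m : ℕ} (hfd : Module.finrank ℝ V = m + 1)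
    (Ω' : Form V (m + 1)) (f : Module.Dual ℝ V) (w : V) :
    wedge (oneForm f) (icontr w Ω') = f w • castF (by omega : m + 1 = 1 + m) Ω' := by
  have hfin : FiniteDimensional ℝ V := FiniteDimensional.of_finrank_pos (by omega)
  ext x
  set q0 : Fin (1 + m) := finSumFinEquiv (Sum.inl 0) with hq0
  set p : Fin m → Fin (1 + m) := fun j => finSumFinEquiv (Sum.inr j) with hp
  set xr : Fin (m + 1) → V := Fin.cons w (fun k => x (p k)) with hxr
  set y : Fin (1 + (m + 1)) → V :=
    fun t => Sum.elim (fun _ : Fin 1 => x q0) xr (finSumFinEquiv.symm t) with hy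
  have hdep : ¬ LinearIndependent ℝ y := by
    intro h
    have := h.fintype_card_le_finrank
    simp [hfd] at this
  have hz : wedge (oneForm f) Ω' y = 0 := AlternatingMap.map_linearDependent _ y hdep
  rw [wedge_oneForm_apply] at hz
  have hy1 : y (finSumFinEquiv (Sum.inl 0)) = x q0 := by simp [hy]
  have hy2 : ∀ i : Fin (m + 1), y (finSumFinEquiv (Sum.inr i)) = xr i := by
    intro i; simp [hy]
  simp only [hy1, hy2] at hz
  rw [Fin.sum_univ_succ] at hz
  have hx0 : xr 0 = w := Fin.cons_zero _ _
  have hxs : ∀ k : Fin m, xr k.succ = x (p k) := fun k => Fin.cons_succ _ _ _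
  have hc0 : (fun i : Fin (m + 1) => if i = 0 then x q0 else xr i)
      = x ∘ finCongr (by omega : m + 1 = 1 + m) := by
    funext i
    induction i using Fin.cases with
    | zero =>
      simp only [if_pos rfl, Function.comp_apply]
      congr 1
    | succ l =>
      simp only [if_neg (Fin.succ_ne_zero l), Function.comp_apply, hxs]
      congr 1
      apply Fin.ext
      simp [hp, finSumFinEquiv]
      omega
  have hck : ∀ k : Fin m, (fun i : Fin (m + 1) => if i = k.succ then x q0 else xr i)
      = Fin.cons w (fun l => if l = k then x q0 else x (p l)) := by
    intro k
    funext i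
    induction i using Fin.cases with
    | zero => simp [if_neg (Fin.succ_ne_zero k).symm, hx0]
    | succ l =>
      by_cases hlk : l = k
      · subst hlk; simp
      · simp [Fin.succ_inj, hlk, hxs]
  rw [hc0] at hz
  simp only [hck, hx0, hxs] at hz
  rw [wedge_oneForm_apply]
  have hic : ∀ z : Fin m → V, icontr w Ω' z = Ω' (Fin.cons w z) := fun z => rfl
  simp only [hic]
  have hxr' : Fin.cons w (fun i => x (p i)) = xr := rfl
  rw [hxr']
  have hr : (f w • castF (by omega : m + 1 = 1 + m) Ω') x
      = f w * Ω' (x ∘ finCongr (by omega : m + 1 = 1 + m)) := rfl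
  rw [hr]
  linarith [hz]

theorem castF_eq_zero_iff {m k : ℕ} (h : m = k) (α : Form V m) :
    castF h α = 0 ↔ α = 0 := by
  subst h
  constructor
  · intro h0
    ext z
    have := AlternatingMap.ext_iff.mp h0 z
    simpa [castF] using this
  · rintro rfl
    ext z
    simp [castF]

end SEM

end Aux

/-- Let `V` be an `n`-dimensional real vector space with a
nondegenerate symmetric bilinear form `g`, let `T̂ : V → V` be linear, and let `Ω` be a
nonzero alternating `n`-form.  Writing `ũ = g(u,−)`, the following are equivalent:
(i) `g(T̂ u, v) = g(T̂ v, u)` for all `u, v`;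
(ii) `ṽ ∧ i_{T̂ u} Ω = ũ ∧ i_{T̂ v} Ω` for all `u, v`. -/
theorem statement12 {V : Type*} [AddCommGroup V] [Module ℝ V] (n : ℕ) (hn : 0 < n)
    (hdim : Module.finrank ℝ V = n)
    (g : V →ₗ[ℝ] V →ₗ[ℝ] ℝ) (hsymm : ∀ u v : V, g u v = g v u)
    (hnondeg : ∀ u : V, (∀ v : V, g u v = 0) → u = 0)
    (T : V →ₗ[ℝ] V) (Ω : SEM.Form V n) (hΩ : Ω ≠ 0) :
    (∀ u v : V, g (T u) v = g (T v) u) ↔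
      (∀ u v : V,
        SEM.wedge (SEM.oneForm (g v))
            (SEM.icontr (T u) (SEM.castF (by omega : n = (n - 1) + 1) Ω))
          = SEM.wedge (SEM.oneForm (g u))
              (SEM.icontr (T v) (SEM.castF (by omega : n = (n - 1) + 1) Ω))) := by
  obtain ⟨m, rfl⟩ : ∃ m, n = m + 1 := ⟨n - 1, by omega⟩
  have hfd : Module.finrank ℝ V = m + 1 := hdim
  have hΩ2 : SEM.castF (by omega : m + 1 = 1 + m)
      (SEM.castF (by omega : m + 1 = (m + 1 - 1) + 1) Ω) ≠ 0 := by
    intro h0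
    exact hΩ (by
      have h1 := (SEM.castF_eq_zero_iff _ _).mp h0
      exact (SEM.castF_eq_zero_iff _ _).mp h1)
  have hk : ∀ (f : Module.Dual ℝ V) (w : V),
      SEM.wedge (SEM.oneForm f)
          (SEM.icontr w (SEM.castF (by omega : m + 1 = (m + 1 - 1) + 1) Ω))
        = f w • SEM.castF (by omega : m + 1 = 1 + m)
            (SEM.castF (by omega : m + 1 = (m + 1 - 1) + 1) Ω) := fun f w =>
    SEM.key hfd _ f w
  constructor
  · intro hi u v
    rw [hk (g v) (T u), hk (g u) (T v)]
    have h3 : g v (T u) = g u (T v) := by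
      rw [hsymm v (T u), hi u v, hsymm (T v) u]
    rw [h3]
  · intro hii u v
    have h2 := hii u v
    rw [hk (g v) (T u), hk (g u) (T v)] at h2
    have h3 : g v (T u) = g u (T v) := by
      by_contra hne
      apply hΩ2
      have h4 : (g v (T u) - g u (T v)) • SEM.castF (by omega : m + 1 = 1 + m)
          (SEM.castF (by omega : m + 1 = (m + 1 - 1) + 1) Ω) = 0 := by
        have h2' := sub_eq_zero_of_eq h2
        rw [← h2']
        exact sub_smul (R := ℝ) (M := SEM.Form V (1 + m)) _ _ _
      have h5 := congrArg (fun z => (g v (T u) - g u (T v))⁻¹ • z) h4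
      simpa [smul_smul, inv_mul_cancel₀ (sub_ne_zero.mpr hne)] using h5
    rw [hsymm (T u) v, h3, hsymm u (T v)]
end
end
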